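/- Let Φ be a reduced crystallographic root system with simple roots α_1, …, α_n, coroot lattice R^∨, coweight lattice Q^∨, and Weyl group W, and let w₀ ∈ W satisfy w₀² = I and w₀ρ̌ = −ρ̌. Let λ ∈ Q^∨ and η ∈ Q^∨ with ⟨α_i, η⟩ = 1, η − λ ∈ R^∨, and proj_i(λ − 2ρ̌) = proj_i(η). Set ζ := ρ̌ + w₀s_i(λ − ρ̌), b := t^η s_i ∈ W̃, and s_{i₁} := w₀ s_i w₀. Then: (1) there exists an integer d_i ∈ ℤ with s_i w₀ ζ − η = d_i·α_i^∨; and (2) for this d_i, setting y := t^{d_i·w₀s_iη}(w₀s_i) ∈ W̃, one has y b y⁻¹ = t^ζ s_{i₁}. -/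
import Mathlib


open scoped RealInnerProductSpace

namespace ADLV

variable {V : Type*} [NormedAddCommGroup V] [InnerProductSpace ℝ V]

/-- The coroot `α^∨ = 2α/(α,α)` of a root `α`. -/
noncomputable def coroot (α : V) : V := (2 / ⟪α, α⟫) • α

/-- The reflection `s_α : x ↦ x - ⟨α, x⟩ α^∨` in the hyperplane orthogonal to `α`,
as a linear automorphism. -/
noncomputable def sRefl (α : V) (hα : α ≠ 0) : V ≃ₗ[ℝ] V :=
  Module.reflection (f := (innerSL ℝ α : V →ₗ[ℝ] ℝ)) (x := coroot α)
    (by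
      have h : ⟪α, α⟫ ≠ 0 := inner_self_ne_zero.mpr hα
      simp [coroot, real_inner_smul_right]
      field_simp)

/-- The orthogonal projection `proj_α : x ↦ x - ½⟨α, x⟩ α^∨` of `V` onto the
hyperplane `H_α = {x : ⟨α, x⟩ = 0}`. -/
noncomputable def projH (α : V) (x : V) : V := x - (⟪α, x⟫ / 2) • coroot α

/-- The (finite) Weyl group: the group generated by the simple reflections. -/
noncomputable def weylGroup {n : ℕ} (α : Fin n → V) (hα : ∀ j, α j ≠ 0) :
    Subgroup (V ≃ₗ[ℝ] V) :=
  Subgroup.closure (Set.range fun j => sRefl (α j) (hα j))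

/-- The coroot lattice `R^∨ = ⊕_j ℤ α_j^∨`. -/
noncomputable def corootLattice {n : ℕ} (α : Fin n → V) : AddSubgroup V :=
  AddSubgroup.closure (Set.range fun j => coroot (α j))

/-- The coweight lattice `Q^∨ = {x : ⟨α_j, x⟩ ∈ ℤ for all j}`. -/
def coweightLattice {n : ℕ} (α : Fin n → V) : Set V :=
  {x : V | ∀ j, ∃ m : ℤ, ⟪α j, x⟫ = (m : ℝ)}

/-- Elements `t^μ u` of the (extended) affine Weyl group `Q^∨ ⋊ W`, realized inside the
semidirect product `V ⋊ GL(V)` with multiplication `(t^μ u)(t^λ v) = t^{μ + uλ}(uv)`. -/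
@[ext]
structure Aff (V : Type*) [NormedAddCommGroup V] [InnerProductSpace ℝ V] where
  /-- the translation part -/
  t : V
  /-- the linear part -/
  w : V ≃ₗ[ℝ] V

namespace Aff

instance : Mul (Aff V) := ⟨fun a b => ⟨a.t + a.w b.t, a.w * b.w⟩⟩
instance : One (Aff V) := ⟨⟨0, 1⟩⟩
instance : Inv (Aff V) := ⟨fun a => ⟨-(a.w⁻¹ a.t), a.w⁻¹⟩⟩

@[simp] lemma mul_t (a b : Aff V) : (a * b).t = a.t + a.w b.t := rfl
@[simp] lemma mul_w (a b : Aff V) : (a * b).w = a.w * b.w := rfl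
@[simp] lemma one_t : (1 : Aff V).t = 0 := rfl
@[simp] lemma one_w : (1 : Aff V).w = 1 := rfl
@[simp] lemma inv_t (a : Aff V) : (a⁻¹).t = -(a.w⁻¹ a.t) := rfl
@[simp] lemma inv_w (a : Aff V) : (a⁻¹).w = a.w⁻¹ := rfl

lemma mul_apply_w (f g : V ≃ₗ[ℝ] V) (x : V) : (f * g) x = f (g x) := rfl

instance : Group (Aff V) where
  mul_assoc a b c := by
    refine Aff.ext ?_ ?_
    · simp [mul_apply_w, map_add, add_assoc]
    · simp [mul_assoc]
  one_mul a := by refine Aff.ext ?_ ?_ <;> simp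
  mul_one a := by refine Aff.ext ?_ ?_ <;> simp
  inv_mul_cancel a := by
    refine Aff.ext ?_ ?_
    · simp [mul_apply_w]
    · simp

end Aff


section AuxLemmas

variable {V : Type*} [NormedAddCommGroup V] [InnerProductSpace ℝ V]

lemma sRefl_apply (α : V) (hα : α ≠ 0) (x : V) :
    sRefl α hα x = x - ⟪α, x⟫ • coroot α := by
  simp [sRefl, Module.reflection_apply]

lemma inner_coroot_self (α : V) (hα : α ≠ 0) : ⟪α, coroot α⟫ = 2 := by
  have h : ⟪α, α⟫ ≠ 0 := inner_self_ne_zero.mpr hα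
  rw [coroot, real_inner_smul_right]
  field_simp

lemma sRefl_coroot (α : V) (hα : α ≠ 0) : sRefl α hα (coroot α) = - coroot α := by
  rw [sRefl_apply α hα, inner_coroot_self α hα, two_smul]
  abel

lemma sRefl_sRefl (α : V) (hα : α ≠ 0) (x : V) : sRefl α hα (sRefl α hα x) = x :=
  Module.involutive_reflection _ x

lemma sRefl_mul_self (α : V) (hα : α ≠ 0) : sRefl α hα * sRefl α hα = 1 := by
  ext x
  exact sRefl_sRefl α hα x

lemma sRefl_inv (α : V) (hα : α ≠ 0) : (sRefl α hα)⁻¹ = sRefl α hα :=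
  inv_eq_of_mul_eq_one_right (sRefl_mul_self α hα)

/-- The key stability property: `w` preserves the coweight lattice and moves
coweights by elements of the coroot lattice. -/
def lattStable {n : ℕ} (α : Fin n → V) (w : V ≃ₗ[ℝ] V) : Prop :=
  ∀ x ∈ coweightLattice α, w x ∈ coweightLattice α ∧ w x - x ∈ corootLattice α

lemma lattStable_one {n : ℕ} (α : Fin n → V) : lattStable α 1 := by
  intro x hx
  refine ⟨hx, ?_⟩
  have h1 : (1 : V ≃ₗ[ℝ] V) x = x := rfl
  rw [h1, sub_self]
  exact zero_mem _

lemma lattStable_mul {n : ℕ} {α : Fin n → V} {u v : V ≃ₗ[ℝ] V}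
    (hu : lattStable α u) (hv : lattStable α v) : lattStable α (u * v) := by
  intro x hx
  obtain ⟨hv1, hv2⟩ := hv x hx
  obtain ⟨hu1, hu2⟩ := hu _ hv1
  rw [Aff.mul_apply_w]
  refine ⟨hu1, ?_⟩
  have h : u (v x) - x = (u (v x) - v x) + (v x - x) := by abel
  rw [h]
  exact add_mem hu2 hv2

lemma lattStable_sRefl {n : ℕ} {α : Fin n → V} (hα : ∀ j, α j ≠ 0)
    (hcart : ∀ k j, ∃ m : ℤ, ⟪α k, coroot (α j)⟫ = (m : ℝ)) (j : Fin n) :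
    lattStable α (sRefl (α j) (hα j)) := by
  intro x hx
  obtain ⟨m, hm⟩ := hx j
  constructor
  · intro k
    obtain ⟨m', hm'⟩ := hx k
    obtain ⟨c, hc⟩ := hcart k j
    refine ⟨m' - m * c, ?_⟩
    rw [sRefl_apply, inner_sub_right, real_inner_smul_right, hm, hm', hc]
    push_cast
    ring
  · have h2 : sRefl (α j) (hα j) x - x = (-m : ℤ) • coroot (α j) := by
      rw [sRefl_apply, hm, ← Int.cast_smul_eq_zsmul ℝ]
      push_cast
      rw [neg_smul]
      abel
    rw [h2]
    exact AddSubgroup.zsmul_mem _ (AddSubgroup.subset_closure (Set.mem_range_self j)) _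

lemma weylGroup_lattStable {n : ℕ} {α : Fin n → V} {hα : ∀ j, α j ≠ 0}
    (hcart : ∀ k j, ∃ m : ℤ, ⟪α k, coroot (α j)⟫ = (m : ℝ))
    {w : V ≃ₗ[ℝ] V} (hw : w ∈ weylGroup α hα) :
    lattStable α w := by
  have main : lattStable α w ∧ lattStable α w⁻¹ := by
    induction hw using Subgroup.closure_induction with
    | mem x hx =>
      obtain ⟨j, rfl⟩ := hx
      exact ⟨lattStable_sRefl hα hcart j,
        by rw [sRefl_inv]; exact lattStable_sRefl hα hcart j⟩
    | one => exact ⟨lattStable_one α, by rw [inv_one]; exact lattStable_one α⟩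
    | mul u v hu hv ihu ihv =>
      exact ⟨lattStable_mul ihu.1 ihv.1,
        by rw [mul_inv_rev]; exact lattStable_mul ihv.2 ihu.2⟩
    | inv u hu ih => exact ⟨ih.2, by rw [inv_inv]; exact ih.1⟩
  exact main.1

lemma exists_int_of_mem_corootLattice {n : ℕ} {α : Fin n → V}
    (hα : ∀ j, α j ≠ 0) (hlin : LinearIndependent ℝ α)
    {x : V} (hx : x ∈ corootLattice α) {i : Fin n} {t : ℝ}
    (ht : x = t • coroot (α i)) :
    ∃ d : ℤ, x = (d : ℝ) • coroot (α i) := by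
  have hco : LinearIndependent ℝ (fun j => coroot (α j)) := by
    have hu : ∀ j, (2 / ⟪α j, α j⟫ : ℝ) ≠ 0 := fun j =>
      div_ne_zero two_ne_zero (inner_self_ne_zero.mpr (hα j))
    have h := hlin.units_smul (fun j => Units.mk0 _ (hu j))
    have he : (fun j => coroot (α j)) = (fun j => Units.mk0 _ (hu j)) • α := by
      funext j
      simp [coroot, Units.smul_def]
    rw [he]
    exact h
  rw [corootLattice, ← Submodule.span_int_eq_addSubgroupClosure] at hx
  obtain ⟨c, hc⟩ := Finsupp.mem_span_range_iff_exists_finsupp.mp hx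
  refine ⟨c i, ?_⟩
  have hsum : ∑ j, ((c j : ℝ)) • coroot (α j) = x := by
    rw [← hc, Finsupp.sum_fintype]
    · exact Finset.sum_congr rfl fun j _ => (Int.cast_smul_eq_zsmul ℝ _ _)
    · intro j
      exact zero_smul _ _
  have hite : ∑ j, (if j = i then t else 0) • coroot (α j) = t • coroot (α i) := by
    simp [ite_smul, Finset.sum_ite_eq']
  have hzero : ∑ j, (((c j : ℝ)) - (if j = i then t else 0)) • coroot (α j) = 0 := by
    rw [Finset.sum_congr rfl fun j (_ : j ∈ Finset.univ) => sub_smul _ _ _,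
      Finset.sum_sub_distrib, hsum, hite, ht, sub_self]
  have h := (Fintype.linearIndependent_iff.mp hco) _ hzero i
  simp only [if_pos] at h
  have hci : (c i : ℝ) = t := by linarith [h]
  rw [ht, hci]

end AuxLemmas

/-- Keep the setup of the folded gallery: `w₀ ∈ W` with `w₀² = I` and
`w₀ ρ̌ = -ρ̌`; `λ, η ∈ Q^∨` with `⟨α_i, η⟩ = 1`, `η - λ ∈ R^∨` and
`proj_i (λ - 2ρ̌) = proj_i η`.  Set `ζ := ρ̌ + w₀ s_i (λ - ρ̌)`, `b := t^η s_i ∈ W̃` and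
`s_{i₁} := w₀ s_i w₀`.  Then:
(1) there is `d_i ∈ ℤ` with `s_i w₀ ζ - η = d_i • α_i^∨`; and
(2) for this `d_i`, setting `y := t^{d_i • w₀ s_i η} (w₀ s_i) ∈ W̃`, one has
`y b y⁻¹ = t^ζ s_{i₁}`. -/
theorem conjugation_to_final_alcove {n : ℕ}
    (α : Fin n → V) (hα : ∀ j, α j ≠ 0)
    (hlin : LinearIndependent ℝ α)
    -- crystallographic: the Cartan integers `⟨α_k, α_j^∨⟩` are integers
    (hcart : ∀ k j, ∃ m : ℤ, ⟪α k, coroot (α j)⟫ = (m : ℝ))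
    -- `ρ̌` is the half-sum of the positive coroots, so `⟨α_j, ρ̌⟩ = 1` for all `j`
    (ρv : V) (hρ : ∀ j, ⟪α j, ρv⟫ = 1)
    (w₀ : V ≃ₗ[ℝ] V) (hw₀W : w₀ ∈ weylGroup α hα)
    (hw₀2 : w₀ * w₀ = 1) (hw₀ρ : w₀ ρv = -ρv)
    (i : Fin n) (lam η : V)
    (hlam : lam ∈ coweightLattice α) (hη : η ∈ coweightLattice α)
    (hηi : ⟪α i, η⟫ = 1) (hηlam : η - lam ∈ corootLattice α)
    (hproj : projH (α i) (lam - (2 : ℝ) • ρv) = projH (α i) η) :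
    (∃ d : ℤ, sRefl (α i) (hα i) (w₀ (ρv + w₀ (sRefl (α i) (hα i) (lam - ρv)))) - η
        = (d : ℝ) • coroot (α i)) ∧
    (∀ d : ℤ, sRefl (α i) (hα i) (w₀ (ρv + w₀ (sRefl (α i) (hα i) (lam - ρv)))) - η
        = (d : ℝ) • coroot (α i) →
      Aff.mk ((d : ℝ) • (w₀ (sRefl (α i) (hα i) η))) (w₀ * sRefl (α i) (hα i))
          * Aff.mk η (sRefl (α i) (hα i))
          * (Aff.mk ((d : ℝ) • (w₀ (sRefl (α i) (hα i) η))) (w₀ * sRefl (α i) (hα i)))⁻¹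
        = Aff.mk (ρv + w₀ (sRefl (α i) (hα i) (lam - ρv)))
            (w₀ * sRefl (α i) (hα i) * w₀)) := by
  classical
  set s := sRefl (α i) (hα i) with hsdef
  have hss : ∀ x, s (s x) = x := sRefl_sRefl (α i) (hα i)
  have hs2 : s * s = 1 := sRefl_mul_self (α i) (hα i)
  have hsinv : s⁻¹ = s := sRefl_inv (α i) (hα i)
  have hsc : s (coroot (α i)) = - coroot (α i) := sRefl_coroot (α i) (hα i)
  have hw₀inv : w₀⁻¹ = w₀ := inv_eq_of_mul_eq_one_right hw₀2
  have hww : ∀ x, w₀ (w₀ x) = x := by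
    intro x
    calc w₀ (w₀ x) = (w₀ * w₀) x := (Aff.mul_apply_w w₀ w₀ x).symm
    _ = (1 : V ≃ₗ[ℝ] V) x := by rw [hw₀2]
    _ = x := rfl
  have hsρ : s ρv = ρv - coroot (α i) := by
    rw [hsdef, sRefl_apply, hρ i, one_smul]
  have hsη : s η = η - coroot (α i) := by
    rw [hsdef, sRefl_apply, hηi, one_smul]
  -- consequence of the projection hypothesis
  have hprsub : lam - (2:ℝ) • ρv - η
      = ((⟪α i, lam - (2:ℝ) • ρv⟫ - ⟪α i, η⟫)/2) • coroot (α i) := by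
    have h := hproj
    unfold projH at h
    rw [sub_eq_sub_iff_sub_eq_sub] at h
    rw [h, ← sub_smul, sub_div]
  -- the key computation
  have key : s (w₀ (ρv + w₀ (s (lam - ρv)))) - η
      = (lam - (2:ℝ) • ρv - η) + coroot (α i) := by
    rw [map_add w₀, hw₀ρ, hww, map_add s, map_neg s, hsρ, hss]
    module
  have hrt : s (w₀ (ρv + w₀ (s (lam - ρv)))) - η
      = ((⟪α i, lam - (2:ℝ) • ρv⟫ - ⟪α i, η⟫)/2 + 1) • coroot (α i) := by
    rw [key, hprsub, add_smul, one_smul]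
  -- lattice memberships
  have hQρ : ρv ∈ coweightLattice α := fun j => ⟨1, by rw [hρ j]; norm_num⟩
  have hQsub : ∀ x y : V, x ∈ coweightLattice α → y ∈ coweightLattice α →
      x - y ∈ coweightLattice α := by
    intro x y hx hy j
    obtain ⟨m, hm⟩ := hx j
    obtain ⟨m', hm'⟩ := hy j
    exact ⟨m - m', by rw [inner_sub_right, hm, hm']; push_cast; ring⟩
  have hQadd : ∀ x y : V, x ∈ coweightLattice α → y ∈ coweightLattice α →
      x + y ∈ coweightLattice α := by
    intro x y hx hy j
    obtain ⟨m, hm⟩ := hx j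
    obtain ⟨m', hm'⟩ := hy j
    exact ⟨m + m', by rw [inner_add_right, hm, hm']; push_cast; ring⟩
  have hsW : lattStable α s := lattStable_sRefl hα hcart i
  have hw₀S : lattStable α w₀ := weylGroup_lattStable hcart hw₀W
  have hwst : lattStable α (w₀ * s) := lattStable_mul hw₀S hsW
  have hswt : lattStable α (s * w₀) := lattStable_mul hsW hw₀S
  have hQlamρ := hQsub lam ρv hlam hQρ
  obtain ⟨hQ1, hR1⟩ := hwst _ hQlamρ
  rw [Aff.mul_apply_w] at hQ1 hR1
  have hQζ : ρv + w₀ (s (lam - ρv)) ∈ coweightLattice α := hQadd _ _ hQρ hQ1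
  obtain ⟨-, hR2⟩ := hswt _ hQζ
  rw [Aff.mul_apply_w] at hR2
  have hRlam_eta : lam - η ∈ corootLattice α := by
    have h := neg_mem hηlam
    rwa [neg_sub] at h
  have hXmem : s (w₀ (ρv + w₀ (s (lam - ρv)))) - η ∈ corootLattice α := by
    have hsum := add_mem (add_mem hR2 hR1) hRlam_eta
    have heq : s (w₀ (ρv + w₀ (s (lam - ρv)))) - η
        = (s (w₀ (ρv + w₀ (s (lam - ρv)))) - (ρv + w₀ (s (lam - ρv))))
          + (w₀ (s (lam - ρv)) - (lam - ρv)) + (lam - η) := by abel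
    rw [heq]
    exact hsum
  have part1 : ∃ d : ℤ, s (w₀ (ρv + w₀ (s (lam - ρv)))) - η
      = (d : ℝ) • coroot (α i) :=
    exists_int_of_mem_corootLattice hα hlin hXmem hrt
  refine ⟨part1, ?_⟩
  intro d hd
  -- identify ζ
  have h1 : w₀ (s (s (w₀ (ρv + w₀ (s (lam - ρv))))))
      = w₀ (s ((d:ℝ) • coroot (α i) + η)) :=
    congrArg (fun z => w₀ (s z)) (sub_eq_iff_eq_add.mp hd)
  rw [hss, hww, map_add s, map_smul s, hsc] at h1
  -- h1 : ρv + w₀ (s (lam - ρv)) = w₀ ((d:ℝ) • -coroot (α i) + s η)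
  -- auxiliary computations for the affine product
  have hinvA : ((w₀ * s)⁻¹) ((d:ℝ) • w₀ (s η)) = (d:ℝ) • η := by
    rw [mul_inv_rev, hsinv, hw₀inv, Aff.mul_apply_w, map_smul w₀, hww, map_smul s, hss]
  have hws2 : ∀ z, ((w₀ * s) * s) z = w₀ z := by
    intro z
    rw [Aff.mul_apply_w, Aff.mul_apply_w, hss]
  refine Aff.ext ?_ ?_
  · -- translation parts
    simp only [Aff.mul_t, Aff.mul_w, Aff.inv_t, Aff.inv_w]
    rw [hinvA, hws2, Aff.mul_apply_w, h1, hsη]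
    simp only [map_add, map_sub, map_neg, map_smul, smul_neg, smul_sub]
    module
  · -- linear parts
    simp only [Aff.mul_w, Aff.inv_w]
    rw [mul_inv_rev, hsinv, hw₀inv, mul_assoc w₀ s s, hs2, mul_one, mul_assoc]


end ADLV
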